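/- Let I be an infinite set. Every bounded linear operator T on ℓ^1(I) that is a linear preserver of submajorization on ℓ^1(I)^+ is a linear preserver of weak majorization on ℓ^1(I)^+; that is, P_s(ℓ^1(I)^+) ⊆ P_w(ℓ^1(I)^+). -/

import Mathlib

open scoped ENNReal BigOperators

noncomputable section

/-- ℓᵖ(I) with real scalars. -/
abbrev Lp (I : Type*) (p : ℝ≥0∞) := lp (fun _ : I => ℝ) p

/-- The standard basis vector `e_j` of `ℓᵖ(I)`. -/
def stdVec {I : Type*} (p : ℝ≥0∞) (j : I) : Lp I p :=
  haveI := Classical.decEq I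
  lp.single p j 1

/-- A bounded operator on ℓᵖ(I) is positive if it maps the positive cone into itself. -/
def IsPos {I : Type*} {p : ℝ≥0∞} [Fact (1 ≤ p)] (A : Lp I p →L[ℝ] Lp I p) : Prop :=
  ∀ f : Lp I p, (∀ i, 0 ≤ f i) → ∀ i, 0 ≤ A f i

/-- Doubly stochastic operator on ℓᵖ(I). -/
def DoublyStochastic {I : Type*} {p : ℝ≥0∞} [Fact (1 ≤ p)]
    (A : Lp I p →L[ℝ] Lp I p) : Prop :=
  IsPos A ∧ (∀ i : I, HasSum (fun j : I => A (stdVec p j) i) 1)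
          ∧ (∀ j : I, HasSum (fun i : I => A (stdVec p j) i) 1)

/-- Doubly substochastic operator on ℓᵖ(I) (finite partial sums formulation). -/
def DoublySubstochastic {I : Type*} {p : ℝ≥0∞} [Fact (1 ≤ p)]
    (A : Lp I p →L[ℝ] Lp I p) : Prop :=
  IsPos A ∧ (∀ i : I, ∀ s : Finset I, ∑ j ∈ s, A (stdVec p j) i ≤ 1)
          ∧ (∀ j : I, ∀ s : Finset I, ∑ i ∈ s, A (stdVec p j) i ≤ 1)

/-- Increasable doubly substochastic operator on ℓᵖ(I). -/
def IncreasableDsS {I : Type*} {p : ℝ≥0∞} [Fact (1 ≤ p)]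
    (A : Lp I p →L[ℝ] Lp I p) : Prop :=
  IsPos A ∧ ∃ A₁ : Lp I p →L[ℝ] Lp I p, DoublyStochastic A₁ ∧
    ∀ i j : I, A (stdVec p j) i ≤ A₁ (stdVec p j) i

/-- Majorization: `f ≺ g`. -/
def Maj {I : Type*} {p : ℝ≥0∞} [Fact (1 ≤ p)] (f g : Lp I p) : Prop :=
  ∃ D : Lp I p →L[ℝ] Lp I p, DoublyStochastic D ∧ f = D g

/-- Weak majorization: `f ≺_w g`. -/
def MajW {I : Type*} {p : ℝ≥0∞} [Fact (1 ≤ p)] (f g : Lp I p) : Prop :=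
  ∃ D : Lp I p →L[ℝ] Lp I p, DoublySubstochastic D ∧ f = D g

/-- Submajorization: `f ≺_s g`. -/
def MajS {I : Type*} {p : ℝ≥0∞} [Fact (1 ≤ p)] (f g : Lp I p) : Prop :=
  ∃ D : Lp I p →L[ℝ] Lp I p, IncreasableDsS D ∧ f = D g

/-- Permutation operator on ℓᵖ(I). -/
def IsPermutationOp {I : Type*} {p : ℝ≥0∞} [Fact (1 ≤ p)]
    (P : Lp I p →L[ℝ] Lp I p) : Prop :=
  ∃ θ : I ≃ I, ∀ j : I, P (stdVec p j) = stdVec p (θ j)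

/-- `P` is the operator `P_θ` associated with the injection `θ : I → I`,
i.e. `P f = ∑_{k ∈ I} f(k) e_{θ(k)}`. -/
def IsPTheta {I : Type*} {p : ℝ≥0∞} [Fact (1 ≤ p)] (θ : I → I)
    (P : Lp I p →L[ℝ] Lp I p) : Prop :=
  (∀ f : Lp I p, ∀ k : I, P f (θ k) = f k) ∧
  (∀ f : Lp I p, ∀ i : I, i ∉ Set.range θ → P f i = 0)

/-- `T` preserves weak majorization on the positive cone. -/
def PreservesMajW {I : Type*} {p : ℝ≥0∞} [Fact (1 ≤ p)]
    (T : Lp I p →L[ℝ] Lp I p) : Prop :=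
  ∀ f g : Lp I p, (∀ i, 0 ≤ f i) → (∀ i, 0 ≤ g i) → MajW f g → MajW (T f) (T g)

/-- `T` preserves submajorization on the positive cone. -/
def PreservesMajS {I : Type*} {p : ℝ≥0∞} [Fact (1 ≤ p)]
    (T : Lp I p →L[ℝ] Lp I p) : Prop :=
  ∀ f g : Lp I p, (∀ i, 0 ≤ f i) → (∀ i, 0 ≤ g i) → MajS f g → MajS (T f) (T g)

end


namespace Stmt18Aux

open Filter Topology

variable {I : Type*}

/-! ### Basic `ℓ¹` facts -/

lemma summable_norm_lp1 (h : Lp I 1) : Summable fun i => ‖h i‖ := by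
  have hm := lp.memℓp h
  rw [memℓp_gen_iff (by norm_num : 0 < (1 : ℝ≥0∞).toReal)] at hm
  simpa using hm

lemma norm_lp1 (h : Lp I 1) : ‖h‖ = ∑' i, ‖h i‖ := by
  have := lp.norm_eq_tsum_rpow (by norm_num : 0 < (1 : ℝ≥0∞).toReal) h
  simpa using this

/-- Coordinate evaluation as a continuous linear functional on `ℓ¹`. -/
noncomputable def coordCLM (i : I) : Lp I 1 →L[ℝ] ℝ :=
  LinearMap.mkContinuous
    { toFun := fun f => f i
      map_add' := fun f g => by exact congrFun (lp.coeFn_add f g) i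
      map_smul' := fun c f => by exact congrFun (lp.coeFn_smul c f) i }
    1 fun f => by simpa using lp.norm_apply_le_norm one_ne_zero f i

@[simp] lemma coordCLM_apply (i : I) (f : Lp I 1) : coordCLM i f = f i := rfl

lemma stdVec_eq_single [DecidableEq I] (p : ℝ≥0∞) (j : I) :
    stdVec (I := I) p j = lp.single p j 1 := by
  unfold stdVec
  congr!

lemma stdVec_apply_self (j : I) : (stdVec (I := I) 1 j) j = 1 := by
  classical
  rw [stdVec_eq_single]
  exact lp.single_apply_self 1 j 1

lemma stdVec_apply_ne {j k : I} (h : k ≠ j) : (stdVec (I := I) 1 j) k = 0 := by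
  classical
  rw [stdVec_eq_single]
  exact lp.single_apply_ne 1 j 1 h

lemma stdVec_nonneg (j k : I) : 0 ≤ (stdVec (I := I) 1 j) k := by
  rcases eq_or_ne k j with rfl | h
  · rw [stdVec_apply_self]; norm_num
  · rw [stdVec_apply_ne h]

/-- Representation of a bounded operator on `ℓ¹` by its matrix, in each coordinate. -/
lemma hasSum_coord (D : Lp I 1 →L[ℝ] Lp I 1) (h : Lp I 1) (i : I) :
    HasSum (fun j => h j * (D (stdVec 1 j)) i) ((D h) i) := by
  classical
  have h1 : HasSum (fun j : I => lp.single 1 j (h j)) h :=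
    lp.hasSum_single (by norm_num) h
  have h2 := ((coordCLM i).comp D).hasSum h1
  have h3 : ∀ j, ((coordCLM i).comp D) (lp.single 1 j (h j)) = h j * (D (stdVec 1 j)) i := by
    intro j
    have hs : lp.single 1 j (h j) = h j • stdVec 1 j := by
      rw [stdVec_eq_single]
      rw [← lp.single_smul]
      norm_num
    rw [hs]
    simp only [ContinuousLinearMap.comp_apply, map_smul, coordCLM_apply]
    rw [smul_eq_mul]
  have h4 : (fun j => ((coordCLM i).comp D) (lp.single 1 j (h j)))
      = fun j => h j * (D (stdVec 1 j)) i := funext h3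
  rw [h4] at h2
  exact h2

/-! ### Operators defined by substochastic matrices -/

lemma matrixOp_exists (a : I → I → ℝ) (h0 : ∀ i j, 0 ≤ a i j)
    (hcol : ∀ j, ∀ s : Finset I, ∑ i ∈ s, a i j ≤ 1) :
    ∃ A : Lp I 1 →L[ℝ] Lp I 1, ∀ (h : Lp I 1) (i : I), (A h) i = ∑' j, a i j * h j := by
  classical
  have ha1 : ∀ i j, a i j ≤ 1 := fun i j => by simpa using hcol j {i}
  have hgsum : ∀ (h : I → ℝ), Summable (fun j => ‖h j‖) →
      ∀ i, Summable fun j => a i j * ‖h j‖ := by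
    intro h hh i
    refine hh.of_nonneg_of_le (fun j => mul_nonneg (h0 i j) (norm_nonneg _)) fun j => ?_
    exact mul_le_of_le_one_left (norm_nonneg _) (ha1 i j)
  have hsum : ∀ (h : Lp I 1) (i : I), Summable fun j => a i j * h j := by
    intro h i
    refine Summable.of_norm_bounded (hgsum h (summable_norm_lp1 h) i) fun j => ?_
    rw [norm_mul, Real.norm_of_nonneg (h0 i j)]
  have hnorm_le : ∀ (h : Lp I 1) (i : I),
      ‖∑' j, a i j * h j‖ ≤ ∑' j, a i j * ‖h j‖ := by
    intro h i
    refine (norm_tsum_le_tsum_norm ?_).trans ?_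
    · refine (hgsum h (summable_norm_lp1 h) i).of_nonneg_of_le
        (fun j => norm_nonneg _) fun j => ?_
      rw [norm_mul, Real.norm_of_nonneg (h0 i j)]
    · refine Summable.tsum_le_tsum (fun j => ?_) ?_ (hgsum h (summable_norm_lp1 h) i)
      · rw [norm_mul, Real.norm_of_nonneg (h0 i j)]
      · refine (hgsum h (summable_norm_lp1 h) i).of_nonneg_of_le
          (fun j => norm_nonneg _) fun j => ?_
        rw [norm_mul, Real.norm_of_nonneg (h0 i j)]
  have hGsum : ∀ (h : Lp I 1), Summable fun i => ∑' j, a i j * ‖h j‖ := by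
    intro h
    refine summable_of_sum_le (c := ∑' j, ‖h j‖)
      (fun i => tsum_nonneg fun j => mul_nonneg (h0 i j) (norm_nonneg _)) fun s => ?_
    have hS : HasSum (fun j => ∑ i ∈ s, a i j * ‖h j‖)
        (∑ i ∈ s, ∑' j, a i j * ‖h j‖) :=
      hasSum_sum fun i _ => (hgsum h (summable_norm_lp1 h) i).hasSum
    rw [← hS.tsum_eq]
    refine Summable.tsum_le_tsum (fun j => ?_) hS.summable (summable_norm_lp1 h)
    rw [← Finset.sum_mul]
    exact mul_le_of_le_one_left (norm_nonneg _) (hcol j s)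
  have hGle : ∀ (h : Lp I 1), ∑' i, (∑' j, a i j * ‖h j‖) ≤ ‖h‖ := by
    intro h
    rw [norm_lp1 h]
    refine Summable.tsum_le_of_sum_le (hGsum h) fun s => ?_
    have hS : HasSum (fun j => ∑ i ∈ s, a i j * ‖h j‖)
        (∑ i ∈ s, ∑' j, a i j * ‖h j‖) :=
      hasSum_sum fun i _ => (hgsum h (summable_norm_lp1 h) i).hasSum
    rw [← hS.tsum_eq]
    refine Summable.tsum_le_tsum (fun j => ?_) hS.summable (summable_norm_lp1 h)
    rw [← Finset.sum_mul]
    exact mul_le_of_le_one_left (norm_nonneg _) (hcol j s)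
  have hmemnorm : ∀ (h : Lp I 1), Summable fun i => ‖∑' j, a i j * h j‖ := by
    intro h
    exact (hGsum h).of_nonneg_of_le (fun i => norm_nonneg _) (hnorm_le h)
  have hmem : ∀ (h : Lp I 1), Memℓp (fun i => ∑' j, a i j * h j) 1 := by
    intro h
    apply memℓp_gen
    simpa using hmemnorm h
  refine ⟨LinearMap.mkContinuous
    { toFun := fun h => (⟨fun i => ∑' j, a i j * h j, hmem h⟩ : Lp I 1)
      map_add' := fun x y => by
        apply lp.ext
        funext i
        have : ∀ j, a i j * (x + y) j = a i j * x j + a i j * y j := by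
          intro j
          rw [lp.coeFn_add]
          simp [mul_add]
        show ∑' j, a i j * (x + y) j = _
        rw [tsum_congr this, Summable.tsum_add (hsum x i) (hsum y i)]
        rfl
      map_smul' := fun c x => by
        apply lp.ext
        funext i
        have : ∀ j, a i j * (c • x) j = c * (a i j * x j) := by
          intro j
          rw [lp.coeFn_smul]
          simp [Pi.smul_apply, smul_eq_mul]
          ring
        show ∑' j, a i j * (c • x) j = _
        rw [tsum_congr this, tsum_mul_left]
        rfl }
    1 (fun h => ?_), fun h i => rfl⟩
  rw [one_mul]
  show ‖(⟨fun i => ∑' j, a i j * h j, hmem h⟩ : Lp I 1)‖ ≤ ‖h‖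
  rw [norm_lp1]
  refine le_trans (Summable.tsum_le_tsum (fun i => hnorm_le h i) (hmemnorm h) (hGsum h)) (hGle h)

lemma matrix_entry {a : I → I → ℝ} {A : Lp I 1 →L[ℝ] Lp I 1}
    (hA : ∀ (h : Lp I 1) (i : I), (A h) i = ∑' j, a i j * h j) (i j : I) :
    (A (stdVec 1 j)) i = a i j := by
  classical
  rw [hA]
  have : ∀ k, a i k * (stdVec (I := I) 1 j) k = if k = j then a i j else 0 := by
    intro k
    rcases eq_or_ne k j with rfl | h
    · rw [stdVec_apply_self, if_pos rfl, mul_one]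
    · rw [stdVec_apply_ne h, if_neg h, mul_zero]
  rw [tsum_congr this]
  exact tsum_ite_eq j (fun _ => a i j)

lemma matrix_pos {a : I → I → ℝ} {A : Lp I 1 →L[ℝ] Lp I 1} (h0 : ∀ i j, 0 ≤ a i j)
    (hA : ∀ (h : Lp I 1) (i : I), (A h) i = ∑' j, a i j * h j) : IsPos A := by
  intro h hh i
  rw [hA]
  exact tsum_nonneg fun j => mul_nonneg (h0 i j) (hh j)

/-! ### Northwest-corner construction of a matrix with prescribed marginals -/

lemma clamp_diff {a b u v : ℝ} (hab : a ≤ b) (huv : u ≤ v) :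
    max a (min b v) - max a (min b u) = max 0 (min b v - max a u) := by
  rcases le_total v a with h | h <;> rcases le_total b u with h' | h' <;>
    simp only [max_def, min_def] <;> split_ifs <;> linarith

lemma nw_row {δ : ℝ} (hδ : 0 < δ) (r c : ℕ → ℝ) (hr : ∀ k, δ ≤ r k) (hc : ∀ k, δ ≤ c k)
    (n : ℕ) :
    HasSum (fun m => max 0 (min (∑ k ∈ Finset.range (n + 1), r k)
        (∑ k ∈ Finset.range (m + 1), c k)
      - max (∑ k ∈ Finset.range n, r k) (∑ k ∈ Finset.range m, c k))) (r n) := by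
  set R : ℕ → ℝ := fun N => ∑ k ∈ Finset.range N, r k with hR
  set C : ℕ → ℝ := fun N => ∑ k ∈ Finset.range N, c k with hC
  have hr0 : ∀ k, 0 ≤ r k := fun k => hδ.le.trans (hr k)
  have hc0 : ∀ k, 0 ≤ c k := fun k => hδ.le.trans (hc k)
  have hR0 : ∀ N, 0 ≤ R N := fun N => Finset.sum_nonneg fun k _ => hr0 k
  have hCmono : Monotone C := fun M N h =>
    Finset.sum_le_sum_of_subset_of_nonneg (Finset.range_subset_range.2 h) fun k _ _ => hc0 k
  have hRn : R n ≤ R (n + 1) := by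
    rw [hR]
    simp only [Finset.sum_range_succ]
    have := hr0 n
    linarith [Finset.sum_nonneg (fun k (_ : k ∈ Finset.range n) => hr0 k)]
  have hCtop : Tendsto C atTop atTop := by
    refine tendsto_atTop_mono (fun N => ?_) (tendsto_natCast_atTop_atTop.atTop_mul_const hδ)
    calc (N : ℝ) * δ = ∑ _k ∈ Finset.range N, δ := by
          rw [Finset.sum_const, Finset.card_range, nsmul_eq_mul]
      _ ≤ C N := Finset.sum_le_sum fun k _ => hc k
  have hpartial : ∀ M, ∑ m ∈ Finset.range M,
      max 0 (min (R (n + 1)) (C (m + 1)) - max (R n) (C m))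
      = max (R n) (min (R (n + 1)) (C M)) - R n := by
    intro M
    induction M with
    | zero =>
      have hC0 : C 0 = 0 := by simp [hC]
      rw [Finset.sum_range_zero, hC0, min_eq_right (hR0 (n + 1)), max_eq_left (hR0 n)]
      ring
    | succ M ih =>
      rw [Finset.sum_range_succ, ih, ← clamp_diff hRn (hCmono (Nat.le_succ M))]
      ring
  rw [hasSum_iff_tendsto_nat_of_nonneg (fun m => le_max_left _ _)]
  have hev : ∀ᶠ M in atTop, R (n + 1) ≤ C M := hCtop.eventually_ge_atTop _
  refine Tendsto.congr' ?_ (tendsto_const_nhds (x := r n))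
  refine hev.mono fun M hM => ?_
  show r n = ∑ m ∈ Finset.range M,
    max 0 (min (R (n + 1)) (C (m + 1)) - max (R n) (C m))
  rw [hpartial M, min_eq_left hM, max_eq_right hRn]
  have hsucc : R (n + 1) = R n + r n := Finset.sum_range_succ r n
  linarith

lemma nw_exists {δ : ℝ} (hδ : 0 < δ) (r c : ℕ → ℝ) (hr : ∀ k, δ ≤ r k) (hc : ∀ k, δ ≤ c k) :
    ∃ e : ℕ → ℕ → ℝ, (∀ n m, 0 ≤ e n m) ∧ (∀ n, HasSum (fun m => e n m) (r n)) ∧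
      (∀ m, HasSum (fun n => e n m) (c m)) := by
  refine ⟨fun n m => max 0 (min (∑ k ∈ Finset.range (n + 1), r k)
      (∑ k ∈ Finset.range (m + 1), c k)
    - max (∑ k ∈ Finset.range n, r k) (∑ k ∈ Finset.range m, c k)),
    fun n m => le_max_left _ _, fun n => nw_row hδ r c hr hc n, fun m => ?_⟩
  have h := nw_row hδ c r hc hr m
  have heq : (fun n => max 0 (min (∑ k ∈ Finset.range (n + 1), r k)
      (∑ k ∈ Finset.range (m + 1), c k)
    - max (∑ k ∈ Finset.range n, r k) (∑ k ∈ Finset.range m, c k)))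
      = (fun n => max 0 (min (∑ k ∈ Finset.range (m + 1), c k)
      (∑ k ∈ Finset.range (n + 1), r k)
    - max (∑ k ∈ Finset.range m, c k) (∑ k ∈ Finset.range n, r k))) := by
    funext n
    simp [min_comm, max_comm]
  rw [heq]
  exact h

/-- Existence of a nonnegative matrix with prescribed marginals (all bounded below by a
positive constant) over an infinite index set. -/
lemma marginal_exists {I : Type*} [Infinite I] {δ : ℝ} (hδ : 0 < δ) (r c : I → ℝ)
    (hr : ∀ i, δ ≤ r i) (hc : ∀ j, δ ≤ c j) :
    ∃ E : I → I → ℝ, (∀ i j, 0 ≤ E i j) ∧ (∀ i, HasSum (fun j => E i j) (r i)) ∧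
      (∀ j, HasSum (fun i => E i j) (c j)) := by
  classical
  obtain ⟨eqv⟩ : Nonempty (I ≃ I × ℕ) := by
    apply Cardinal.eq.1
    rw [Cardinal.mk_prod, Cardinal.mk_nat, Cardinal.lift_aleph0, Cardinal.lift_uzero,
      Cardinal.mul_aleph0_eq (Cardinal.aleph0_le_mk I)]
  choose Eb hEb0 hEbrow hEbcol using fun k : I =>
    nw_exists hδ (fun n => r (eqv.symm (k, n))) (fun n => c (eqv.symm (k, n)))
      (fun n => hr _) (fun n => hc _)
  refine ⟨fun i j => if (eqv i).1 = (eqv j).1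
      then Eb (eqv i).1 (eqv i).2 (eqv j).2 else 0, ?_, ?_, ?_⟩
  · intro i j
    dsimp only
    split
    · exact hEb0 _ _ _
    · exact le_rfl
  · intro i
    have h1 : HasSum (fun q : I × ℕ => if (eqv i).1 = q.1
        then Eb (eqv i).1 (eqv i).2 q.2 else 0) (r i) := by
      have hrow := hEbrow (eqv i).1 (eqv i).2
      rw [show ((eqv i).1, (eqv i).2) = eqv i from rfl, Equiv.symm_apply_apply] at hrow
      have hinj : Function.Injective (fun m : ℕ => (((eqv i).1, m) : I × ℕ)) := by
        intro a b hab
        simpa using hab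
      refine (hinj.hasSum_iff ?_).1 ?_
      · intro q hq
        have hne : (eqv i).1 ≠ q.1 := by
          intro hk
          exact hq ⟨q.2, Prod.ext hk rfl⟩
        exact if_neg hne
      · have hcomp : ((fun q : I × ℕ => if (eqv i).1 = q.1
            then Eb (eqv i).1 (eqv i).2 q.2 else 0) ∘ fun m : ℕ => ((eqv i).1, m))
            = fun m => Eb (eqv i).1 (eqv i).2 m := by
          funext mm
          simp
        rw [hcomp]
        exact hrow
    have h2 : (fun j => if (eqv i).1 = (eqv j).1
        then Eb (eqv i).1 (eqv i).2 (eqv j).2 else 0)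
        = (fun q : I × ℕ => if (eqv i).1 = q.1
        then Eb (eqv i).1 (eqv i).2 q.2 else 0) ∘ eqv := by
      funext j
      rfl
    rw [h2]
    exact (Equiv.hasSum_iff eqv).2 h1
  · intro j
    have h1 : HasSum (fun q : I × ℕ => if q.1 = (eqv j).1
        then Eb q.1 q.2 (eqv j).2 else 0) (c j) := by
      have hcol := hEbcol (eqv j).1 (eqv j).2
      rw [show ((eqv j).1, (eqv j).2) = eqv j from rfl, Equiv.symm_apply_apply] at hcol
      have hinj : Function.Injective (fun m : ℕ => (((eqv j).1, m) : I × ℕ)) := by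
        intro a b hab
        simpa using hab
      refine (hinj.hasSum_iff ?_).1 ?_
      · intro q hq
        have hne : q.1 ≠ (eqv j).1 := by
          intro hk
          exact hq ⟨q.2, Prod.ext hk.symm rfl⟩
        exact if_neg hne
      · have hcomp : ((fun q : I × ℕ => if q.1 = (eqv j).1
            then Eb q.1 q.2 (eqv j).2 else 0) ∘ fun m : ℕ => ((eqv j).1, m))
            = fun n => Eb (eqv j).1 n (eqv j).2 := by
          funext mm
          simp
        rw [hcomp]
        exact hcol
    have h2 : (fun i => if (eqv i).1 = (eqv j).1
        then Eb (eqv i).1 (eqv i).2 (eqv j).2 else 0)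
        = (fun q : I × ℕ => if q.1 = (eqv j).1
        then Eb q.1 q.2 (eqv j).2 else 0) ∘ eqv := by
      funext i
      rfl
    rw [h2]
    exact (Equiv.hasSum_iff eqv).2 h1

lemma incr_to_dss {C : Lp I 1 →L[ℝ] Lp I 1} (h : IncreasableDsS C) :
    DoublySubstochastic C := by
  obtain ⟨hpos, A₁, ⟨hA₁pos, hrow, hcol⟩, hle⟩ := h
  have hA₁e : ∀ i j, 0 ≤ (A₁ (stdVec 1 j)) i := fun i j => hA₁pos _ (stdVec_nonneg j) i
  refine ⟨hpos, fun i s => ?_, fun j s => ?_⟩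
  · calc ∑ j ∈ s, (C (stdVec 1 j)) i ≤ ∑ j ∈ s, (A₁ (stdVec 1 j)) i :=
        Finset.sum_le_sum fun j _ => hle i j
      _ ≤ 1 := sum_le_hasSum s (fun j _ => hA₁e i j) (hrow i)
  · calc ∑ i' ∈ s, (C (stdVec 1 j)) i' ≤ ∑ i' ∈ s, (A₁ (stdVec 1 j)) i' :=
        Finset.sum_le_sum fun i' _ => hle i' j
      _ ≤ 1 := sum_le_hasSum s (fun i' _ => hA₁e i' j) (hcol j)

end Stmt18Aux


open Filter Topology in
theorem stmt_18 {I : Type*} [Infinite I]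
    (T : Lp I 1 →L[ℝ] Lp I 1) (hT : PreservesMajS T) :
    PreservesMajW T := by
  classical
  intro f g hf hg hw
  obtain ⟨D, ⟨hDpos, hDrow, hDcol⟩, hfD⟩ := hw
  set d : I → I → ℝ := fun i j => (D (stdVec 1 j)) i with hd
  have hd0 : ∀ i j, 0 ≤ d i j := fun i j => hDpos _ (Stmt18Aux.stdVec_nonneg j) i
  have hdrowS : ∀ i, Summable fun j => d i j :=
    fun i => summable_of_sum_le (fun j => hd0 i j) (hDrow i)
  have hdcolS : ∀ j, Summable fun i => d i j :=
    fun j => summable_of_sum_le (fun i => hd0 i j) (hDcol j)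
  set ρ : I → ℝ := fun i => ∑' j, d i j with hρ
  set γ : I → ℝ := fun j => ∑' i, d i j with hγ
  have hρ1 : ∀ i, ρ i ≤ 1 := fun i => Summable.tsum_le_of_sum_le (hdrowS i) (hDrow i)
  have hγ1 : ∀ j, γ j ≤ 1 := fun j => Summable.tsum_le_of_sum_le (hdcolS j) (hDcol j)
  have hρ0 : ∀ i, 0 ≤ ρ i := fun i => tsum_nonneg fun j => hd0 i j
  have hγ0 : ∀ j, 0 ≤ γ j := fun j => tsum_nonneg fun i => hd0 i j
  -- the sequence of parameters tending to 1
  set τ : ℕ → ℝ := fun n => 1 - ((n : ℝ) + 2)⁻¹ with hτ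
  have hn2pos : ∀ n : ℕ, (0 : ℝ) < (n : ℝ) + 2 := by
    intro n
    positivity
  have hτpos : ∀ n, 0 < τ n := by
    intro n
    have h2 : (1 : ℝ) < (n : ℝ) + 2 := by
      have : (0 : ℝ) ≤ (n : ℝ) := Nat.cast_nonneg n
      linarith
    have h3 : ((n : ℝ) + 2)⁻¹ < 1 := inv_lt_one_of_one_lt₀ h2
    simp only [hτ]
    linarith
  have hτlt1 : ∀ n, τ n < 1 := by
    intro n
    have h3 : 0 < ((n : ℝ) + 2)⁻¹ := by positivity
    simp only [hτ]
    linarith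
  have hτlim : Tendsto τ atTop (𝓝 1) := by
    have h1 : Tendsto (fun n : ℕ => ((n : ℝ) + 2)) atTop atTop :=
      tendsto_atTop_add_const_right _ 2 tendsto_natCast_atTop_atTop
    have h2 : Tendsto (fun n : ℕ => ((n : ℝ) + 2)⁻¹) atTop (𝓝 0) := h1.inv_tendsto_atTop
    have h3 := (tendsto_const_nhds (x := (1 : ℝ)) (f := (atTop : Filter ℕ))).sub h2
    simpa using h3
  -- Step 1: τ n • f is submajorized by g
  have hmaj : ∀ n : ℕ, MajS ((τ n) • f) g := by
    intro n
    obtain ⟨E, hE0, hErow, hEcol⟩ := Stmt18Aux.marginal_exists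
      (δ := 1 - τ n) (by linarith [hτlt1 n])
      (fun i => 1 - τ n * ρ i) (fun j => 1 - τ n * γ j)
      (fun i => by
        show 1 - τ n ≤ 1 - τ n * ρ i
        have h1 := mul_le_of_le_one_right (hτpos n).le (hρ1 i)
        linarith)
      (fun j => by
        show 1 - τ n ≤ 1 - τ n * γ j
        have h1 := mul_le_of_le_one_right (hτpos n).le (hγ1 j)
        linarith)
    set α : I → I → ℝ := fun i j => τ n * d i j + E i j with hα
    have hα0 : ∀ i j, 0 ≤ α i j :=
      fun i j => add_nonneg (mul_nonneg (hτpos n).le (hd0 i j)) (hE0 i j)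
    have hαcolsum : ∀ j, HasSum (fun i => α i j) 1 := by
      intro j
      have h1 := ((hdcolS j).hasSum.mul_left (τ n)).add (hEcol j)
      convert h1 using 1
      · rfl
      · simp only [hγ]; ring
    have hαrowsum : ∀ i, HasSum (fun j => α i j) 1 := by
      intro i
      have h1 := ((hdrowS i).hasSum.mul_left (τ n)).add (hErow i)
      convert h1 using 1
      · rfl
      · simp only [hρ]; ring
    have hαcol : ∀ j, ∀ s : Finset I, ∑ i ∈ s, α i j ≤ 1 :=
      fun j s => sum_le_hasSum s (fun i _ => hα0 i j) (hαcolsum j)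
    obtain ⟨A₁, hA₁⟩ := Stmt18Aux.matrixOp_exists α hα0 hαcol
    refine ⟨(τ n) • D, ⟨?_, A₁, ⟨Stmt18Aux.matrix_pos hα0 hA₁, ?_, ?_⟩, ?_⟩, ?_⟩
    · intro x hx i
      rw [ContinuousLinearMap.smul_apply, lp.coeFn_smul]
      simpa using mul_nonneg (hτpos n).le (hDpos x hx i)
    · intro i
      have heq : (fun j => (A₁ (stdVec 1 j)) i) = fun j => α i j := by
        funext j
        exact Stmt18Aux.matrix_entry hA₁ i j
      rw [heq]
      exact hαrowsum i
    · intro j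
      have heq : (fun i => (A₁ (stdVec 1 j)) i) = fun i => α i j := by
        funext i
        exact Stmt18Aux.matrix_entry hA₁ i j
      rw [heq]
      exact hαcolsum j
    · intro i j
      rw [Stmt18Aux.matrix_entry hA₁ i j]
      have heq : ((τ n • D) (stdVec 1 j)) i = τ n * d i j := by
        rw [ContinuousLinearMap.smul_apply, lp.coeFn_smul]
        simp [hd]
      rw [heq]
      exact le_add_of_nonneg_right (hE0 i j)
    · rw [hfD]
      exact rfl
  -- Step 2: apply the submajorization preserver
  have hsm : ∀ n : ℕ, ∀ i, 0 ≤ ((τ n) • f) i := by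
    intro n i
    rw [lp.coeFn_smul]
    simpa using mul_nonneg (hτpos n).le (hf i)
  have hms : ∀ n : ℕ, MajS (T ((τ n) • f)) (T g) := fun n => hT _ g (hsm n) hg (hmaj n)
  choose Cs hCsIncr hCsEq using hms
  have hCsDss : ∀ n, DoublySubstochastic (Cs n) := fun n => Stmt18Aux.incr_to_dss (hCsIncr n)
  set mn : ℕ → I → I → ℝ := fun n i j => ((Cs n) (stdVec 1 j)) i with hmn
  have hmn0 : ∀ n i j, 0 ≤ mn n i j :=
    fun n i j => (hCsDss n).1 _ (Stmt18Aux.stdVec_nonneg j) i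
  have hmnrow : ∀ n i s, ∑ j ∈ s, mn n i j ≤ 1 := fun n i s => (hCsDss n).2.1 i s
  have hmncol : ∀ n j s, ∑ i ∈ s, mn n i j ≤ 1 := fun n j s => (hCsDss n).2.2 j s
  have hmn1 : ∀ n i j, mn n i j ≤ 1 := by
    intro n i j
    simpa using hmnrow n i {j}
  have hkey_n : ∀ n i, HasSum (fun j => mn n i j * (T g) j) (τ n * (T f) i) := by
    intro n i
    have h1 := Stmt18Aux.hasSum_coord (Cs n) (T g) i
    have h2 : (Cs n) (T g) = (τ n) • (T f) := by
      rw [← hCsEq n, map_smul]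
    have h3 : ((Cs n) (T g)) i = τ n * (T f) i := by
      rw [h2, lp.coeFn_smul]
      simp
    rw [h3] at h1
    simpa [mul_comm] using h1
  -- Step 3: ultrafilter limit of the matrices
  set U : Ultrafilter ℕ := Ultrafilter.of atTop with hU_def
  have hUle : (U : Filter ℕ) ≤ atTop := Ultrafilter.of_le _
  have hτU : Tendsto τ (U : Filter ℕ) (𝓝 1) := hτlim.mono_left hUle
  have hlim : ∀ i j : I, ∃ x, x ∈ Set.Icc (0 : ℝ) 1 ∧
      Tendsto (fun n => mn n i j) (U : Filter ℕ) (𝓝 x) := by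
    intro i j
    have hmem : (↑(U.map fun n => mn n i j) : Filter ℝ) ≤ 𝓟 (Set.Icc (0 : ℝ) 1) := by
      refine Filter.le_principal_iff.2 ?_
      rw [Ultrafilter.mem_coe, Ultrafilter.mem_map]
      exact Filter.univ_mem' fun n => ⟨hmn0 n i j, hmn1 n i j⟩
    obtain ⟨x, hx, hle⟩ := isCompact_Icc.ultrafilter_le_nhds (U.map fun n => mn n i j) hmem
    refine ⟨x, hx, ?_⟩
    rwa [Ultrafilter.coe_map] at hle
  choose m hmIcc hmTendsto using hlim
  have hm0 : ∀ i j, 0 ≤ m i j := fun i j => (hmIcc i j).1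
  have hmrow : ∀ i (s : Finset I), ∑ j ∈ s, m i j ≤ 1 := by
    intro i s
    have ht : Tendsto (fun n => ∑ j ∈ s, mn n i j) (U : Filter ℕ) (𝓝 (∑ j ∈ s, m i j)) :=
      tendsto_finset_sum s fun j _ => hmTendsto i j
    exact le_of_tendsto ht (Filter.Eventually.of_forall fun n => hmnrow n i s)
  have hmcol : ∀ j (s : Finset I), ∑ i ∈ s, m i j ≤ 1 := by
    intro j s
    have ht : Tendsto (fun n => ∑ i ∈ s, mn n i j) (U : Filter ℕ) (𝓝 (∑ i ∈ s, m i j)) :=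
      tendsto_finset_sum s fun i _ => hmTendsto i j
    exact le_of_tendsto ht (Filter.Eventually.of_forall fun n => hmncol n j s)
  have habs : Summable fun j => ‖(T g) j‖ := Stmt18Aux.summable_norm_lp1 (T g)
  have hkey : ∀ i, HasSum (fun j => m i j * (T g) j) ((T f) i) := by
    intro i
    have hbound : ∀ s : Finset I,
        |∑ j ∈ s, m i j * (T g) j - (T f) i| ≤ ∑' j : {j // j ∉ s}, ‖(T g) (j : I)‖ := by
      intro s
      have hn : ∀ n, |∑ j ∈ s, mn n i j * (T g) j - τ n * (T f) i|
          ≤ ∑' j : {j // j ∉ s}, ‖(T g) (j : I)‖ := by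
        intro n
        have hk := hkey_n n i
        have hsub : Summable fun j : {j // j ∉ s} => ‖mn n i (j : I) * (T g) (j : I)‖ := by
          refine (habs.subtype _).of_nonneg_of_le (fun j => norm_nonneg _) fun j => ?_
          rw [norm_mul]
          refine mul_le_of_le_one_left (norm_nonneg _) ?_
          rw [Real.norm_of_nonneg (hmn0 n i j)]
          exact hmn1 n i j
        have hsplit := Summable.sum_add_tsum_subtype_compl hk.summable s
        have h2 : ∑ j ∈ s, mn n i j * (T g) j - τ n * (T f) i
            = -(∑' j : {j // j ∉ s}, mn n i (j : I) * (T g) (j : I)) := by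
          rw [← hk.tsum_eq, ← hsplit]
          ring
        rw [h2, abs_neg]
        calc |∑' j : {j // j ∉ s}, mn n i (j : I) * (T g) (j : I)|
            ≤ ∑' j : {j // j ∉ s}, ‖mn n i (j : I) * (T g) (j : I)‖ :=
              norm_tsum_le_tsum_norm hsub
          _ ≤ ∑' j : {j // j ∉ s}, ‖(T g) (j : I)‖ := by
              refine Summable.tsum_le_tsum (fun j => ?_) hsub (habs.subtype _)
              rw [norm_mul]
              refine mul_le_of_le_one_left (norm_nonneg _) ?_
              rw [Real.norm_of_nonneg (hmn0 n i j)]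
              exact hmn1 n i j
      have hconv : Tendsto (fun n => |∑ j ∈ s, mn n i j * (T g) j - τ n * (T f) i|)
          (U : Filter ℕ) (𝓝 |∑ j ∈ s, m i j * (T g) j - 1 * (T f) i|) := by
        refine Filter.Tendsto.abs ?_
        refine Filter.Tendsto.sub ?_ (hτU.mul_const _)
        exact tendsto_finset_sum s fun j _ => (hmTendsto i j).mul_const _
      have hfin := le_of_tendsto hconv (Filter.Eventually.of_forall hn)
      simpa using hfin
    have htail : Tendsto (fun s : Finset I => ∑' j : {j // j ∉ s}, ‖(T g) (j : I)‖)
        atTop (𝓝 0) := tendsto_tsum_compl_atTop_zero (fun j : I => ‖(T g) j‖)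
    have hdist : Tendsto (fun s : Finset I => dist (∑ j ∈ s, m i j * (T g) j) ((T f) i))
        atTop (𝓝 0) := by
      refine squeeze_zero (fun s => dist_nonneg) (fun s => ?_) htail
      rw [Real.dist_eq]
      exact hbound s
    exact tendsto_iff_dist_tendsto_zero.2 hdist
  -- Step 4: conclude
  obtain ⟨M, hM⟩ := Stmt18Aux.matrixOp_exists m hm0 hmcol
  refine ⟨M, ⟨Stmt18Aux.matrix_pos hm0 hM, ?_, ?_⟩, ?_⟩
  · intro i s
    have heq : ∀ j ∈ s, (M (stdVec 1 j)) i = m i j :=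
      fun j _ => Stmt18Aux.matrix_entry hM i j
    rw [Finset.sum_congr rfl heq]
    exact hmrow i s
  · intro j s
    have heq : ∀ i' ∈ s, (M (stdVec 1 j)) i' = m i' j :=
      fun i' _ => Stmt18Aux.matrix_entry hM i' j
    rw [Finset.sum_congr rfl heq]
    exact hmcol j s
  · apply lp.ext
    funext i
    rw [hM (T g) i]
    exact ((hkey i).tsum_eq).symm
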